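/- For any molecular tree T with n ≥ 5 vertices and n ≡ 3 (mod 4), SO₂(T) ≤ (315n − 281)/425, with equality if and only if T has exactly one vertex of degree 3, which is adjacent to two vertices of degree 1 and one vertex of degree 4, and every vertex of degree 2 is adjacent to two vertices of degree 4 (i.e., m₁₄ = (n−1)/2, m₂₄ = (n−7)/2, m₁₃ = 2, m₃₄ = 1, all other m_{ij} = 0). -/
import Mathlib


open Finset

variable {V : Type*}

/-- The second Sombor index of a simple graph. -/
noncomputable def SO2 [Fintype V] [DecidableEq V] (G : SimpleGraph V) [DecidableRel G.Adj] : ℝ :=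
  ∑ e ∈ G.edgeFinset,
    Sym2.lift ⟨fun u v =>
        |((G.degree u : ℝ)^2 - (G.degree v : ℝ)^2)| / ((G.degree u : ℝ)^2 + (G.degree v : ℝ)^2),
      fun u v => by simp only []; rw [abs_sub_comm, add_comm]⟩ e

/-- `mij G i j` is the number of edges whose endpoint degrees are `i` and `j`. -/
def mij [Fintype V] [DecidableEq V] (G : SimpleGraph V) [DecidableRel G.Adj] (i j : ℕ) : ℕ :=
  (G.edgeFinset.filter (fun e => Sym2.map (fun v => G.degree v) e = s(i, j))).card

/-- `nd G i` is the number of vertices of degree `i`. -/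
def nd [Fintype V] [DecidableEq V] (G : SimpleGraph V) [DecidableRel G.Adj] (i : ℕ) : ℕ :=
  (Finset.univ.filter (fun v => G.degree v = i)).card

/-- The core integer linear-programming lemma. -/
private lemma so2_arith (n m11 m12 m13 m14 m22 m23 m24 m33 m34 m44 n1 n2 n3 n4 : ℕ)
    (e1 : m11+m12+m13+m14+m22+m23+m24+m33+m34+m44 + 1 = n)
    (e2 : n1 = 2*m11 + m12+m13+m14)
    (e3 : 2*n2 = 2*m22 + m12+m23+m24)
    (e4 : 3*n3 = 2*m33 + m13+m23+m34)
    (e5 : 4*n4 = 2*m44 + m14+m24+m34)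
    (e6 : n1+n2+n3+n4 = n)
    (h5 : 5 ≤ n) (hmod : n % 4 = 3) :
    3315*m12 + 4420*m13 + 4875*m14 + 2125*m23 + 3315*m24 + 1547*m34 + 3653 ≤ 4095*n ∧
    (3315*m12 + 4420*m13 + 4875*m14 + 2125*m23 + 3315*m24 + 1547*m34 + 3653 = 4095*n ↔
      (m14 = (n-1)/2 ∧ m24 = (n-7)/2 ∧ m13 = 2 ∧ m34 = 1 ∧ m12 = 0 ∧ m22 = 0 ∧ m23 = 0 ∧ m33 = 0 ∧ m44 = 0)) := by
  have key : 3315*m12 + 4420*m13 + 4875*m14 + 2125*m23 + 3315*m24 + 1547*m34 + 975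
      + (7215*m11 + 2340*m12 + 715*m13 + 4095*m22 + 1450*m23 + 3055*m33 + 1248*m34 + 2535*m44)
      = 4095*n := by omega
  have main : 2679 ≤ 7215*m11 + 2340*m12 + 715*m13 + 4095*m22 + 1450*m23 + 3055*m33 + 1248*m34 + 2535*m44 ∨
      (m13 = 2 ∧ m34 = 1 ∧ m11 = 0 ∧ m12 = 0 ∧ m22 = 0 ∧ m23 = 0 ∧ m33 = 0 ∧ m44 = 0) := by
    clear key
    rcases Nat.lt_or_ge m11 1 with h11 | h11
    case inr => left; omega
    rcases Nat.lt_or_ge m22 1 with h22 | h22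
    case inr => left; omega
    rcases Nat.lt_or_ge m33 1 with h33 | h33
    case inr => left; omega
    obtain rfl : m11 = 0 := by omega
    obtain rfl : m22 = 0 := by omega
    obtain rfl : m33 = 0 := by omega
    clear h11 h22 h33
    rcases Nat.lt_or_ge m44 1 with h44 | h44
    case inr =>
      left
      rcases Nat.lt_or_ge (m12+m13+m23+m34) 1 with h | h
      · rcases Nat.lt_or_ge m44 2 with h44' | h44'
        · exfalso; omega
        · omega
      · omega
    obtain rfl : m44 = 0 := by omega
    clear h44
    rcases Nat.lt_or_ge m12 1 with h12 | h12
    case inr =>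
      left
      rcases Nat.lt_or_ge (m13+m23+m34) 1 with h | h
      · rcases Nat.lt_or_ge m12 2 with h12' | h12'
        · exfalso; omega
        · omega
      · omega
    obtain rfl : m12 = 0 := by omega
    clear h12
    rcases Nat.lt_or_ge m23 2 with h23 | h23
    case inr => left; omega
    rcases Nat.lt_or_ge m13 4 with h13 | h13
    case inr => left; omega
    rcases Nat.lt_or_ge m34 3 with h34 | h34
    case inr => left; omega
    omega
  rcases main with hs | hc
  · constructor
    · clear e1 e2 e3 e4 e5 e6 h5 hmod; omega
    · constructor
      · intro h; exfalso; clear e1 e2 e3 e4 e5 e6 h5 hmod; omega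
      · rintro ⟨h14, h24, h13, h34, h12, h22, h23, h33, h44⟩
        exfalso
        subst h13 h34 h12 h22 h23 h33 h44
        have h11 : m11 = 0 := by clear key hs; omega
        clear e1 e2 e3 e4 e5 e6 h5 hmod key h14 h24
        omega
  · obtain ⟨h13, h34, h11, h12, h22, h23, h33, h44⟩ := hc
    subst h13 h34 h11 h12 h22 h23 h33 h44
    have hm : m14 = (n-1)/2 ∧ m24 = (n-7)/2 := by clear key; omega
    constructor
    · omega
    · constructor
      · intro _; exact ⟨hm.1, hm.2, rfl, rfl, rfl, rfl, rfl, rfl, rfl⟩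
      · intro _; clear hm; clear e1 e2 e3 e4 e5 e6 h5 hmod; omega

private lemma sum_fiber_card {α β M : Type*} [DecidableEq β] [AddCommMonoid M]
    (s : Finset α) (g : α → β) (K : Finset β) (h : ∀ a ∈ s, g a ∈ K) (φ : β → M) :
    ∑ a ∈ s, φ (g a) = ∑ k ∈ K, (s.filter (fun a => g a = k)).card • φ k := by
  rw [← Finset.sum_fiberwise_of_maps_to' h φ]
  exact Finset.sum_congr rfl fun k _ => Finset.sum_const _

/-- The set of possible degree pairs. -/
private def Kdeg : Finset (Sym2 ℕ) :=
  {s(1,1), s(1,2), s(1,3), s(1,4), s(2,2), s(2,3), s(2,4), s(3,3), s(3,4), s(4,4)}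

private lemma mem_Kdeg {a b : ℕ} (h1 : 1 ≤ a) (h2 : a ≤ 4) (h3 : 1 ≤ b) (h4 : b ≤ 4) :
    s(a, b) ∈ Kdeg := by
  interval_cases a <;> interval_cases b <;> decide

private lemma Ksum {M : Type*} [AddCommMonoid M] (f : Sym2 ℕ → M) :
    ∑ k ∈ Kdeg, f k
    = f s(1,1) + (f s(1,2) + (f s(1,3) + (f s(1,4) + (f s(2,2) + (f s(2,3) + (f s(2,4) +
        (f s(3,3) + (f s(3,4) + f s(4,4))))))))) := by
  rw [Kdeg, Finset.sum_insert (by decide), Finset.sum_insert (by decide),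
    Finset.sum_insert (by decide), Finset.sum_insert (by decide), Finset.sum_insert (by decide),
    Finset.sum_insert (by decide), Finset.sum_insert (by decide), Finset.sum_insert (by decide),
    Finset.sum_insert (by decide), Finset.sum_singleton]

private noncomputable def phic : Sym2 ℕ → ℝ :=
  Sym2.lift ⟨fun i j => |((i:ℝ)^2 - (j:ℝ)^2)| / ((i:ℝ)^2 + (j:ℝ)^2),
    by intro a b; dsimp only; rw [abs_sub_comm, add_comm]⟩

private lemma phic11 : phic s(1,1) = 0 := by rw [phic, Sym2.lift_mk]; norm_num
private lemma phic12 : phic s(1,2) = 3315/5525 := by rw [phic, Sym2.lift_mk]; norm_num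
private lemma phic13 : phic s(1,3) = 4420/5525 := by rw [phic, Sym2.lift_mk]; norm_num
private lemma phic14 : phic s(1,4) = 4875/5525 := by rw [phic, Sym2.lift_mk]; norm_num
private lemma phic22 : phic s(2,2) = 0 := by rw [phic, Sym2.lift_mk]; norm_num
private lemma phic23 : phic s(2,3) = 2125/5525 := by rw [phic, Sym2.lift_mk]; norm_num
private lemma phic24 : phic s(2,4) = 3315/5525 := by rw [phic, Sym2.lift_mk]; norm_num
private lemma phic33 : phic s(3,3) = 0 := by rw [phic, Sym2.lift_mk]; norm_num
private lemma phic34 : phic s(3,4) = 1547/5525 := by rw [phic, Sym2.lift_mk]; norm_num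
private lemma phic44 : phic s(4,4) = 0 := by rw [phic, Sym2.lift_mk]; norm_num

private lemma degree_one_le [Fintype V] [DecidableEq V] (T : SimpleGraph V) [DecidableRel T.Adj]
    (hc : T.Connected) (h2 : 2 ≤ Fintype.card V) (v : V) : 1 ≤ T.degree v := by
  have : 0 < T.degree v := by
    rw [T.degree_pos_iff_exists_adj]
    obtain ⟨w, hw⟩ := Fintype.exists_ne_of_one_lt_card (by omega) v
    obtain ⟨p⟩ := hc.preconnected v w
    cases p with
    | nil => exact absurd rfl hw
    | cons h q => exact ⟨_, h⟩
  exact this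

/-- counting incidences at degree-`i` vertices -/
private lemma count_deg [Fintype V] [DecidableEq V] (T : SimpleGraph V) [DecidableRel T.Adj]
    (i : ℕ) :
    i * nd T i = ∑ e ∈ T.edgeFinset,
      (Sym2.lift ⟨fun a b => (if a = i then 1 else 0) + (if b = i then 1 else 0),
        by intro a b; dsimp only; rw [add_comm]⟩ : Sym2 ℕ → ℕ)
        (Sym2.map (fun v => T.degree v) e) := by
  classical
  have h1 : i * nd T i = ∑ v ∈ Finset.univ.filter (fun v => T.degree v = i), T.degree v := by
    rw [Finset.sum_congr rfl (fun v hv => (Finset.mem_filter.mp hv).2), Finset.sum_const,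
      smul_eq_mul, nd, mul_comm]
  rw [h1]
  have h2 : ∀ v : V, T.degree v = (T.edgeFinset.filter (fun e => v ∈ e)).card := by
    intro v
    rw [← T.card_incidenceFinset_eq_degree v, T.incidenceFinset_eq_filter v]
  calc ∑ v ∈ Finset.univ.filter (fun v => T.degree v = i), T.degree v
      = ∑ v ∈ Finset.univ.filter (fun v => T.degree v = i),
          ∑ e ∈ T.edgeFinset, (if v ∈ e then 1 else 0) := by
        refine Finset.sum_congr rfl fun v _ => ?_
        rw [h2 v, Finset.card_filter]
    _ = ∑ e ∈ T.edgeFinset,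
          ∑ v ∈ Finset.univ.filter (fun v => T.degree v = i), (if v ∈ e then 1 else 0) :=
        Finset.sum_comm
    _ = _ := by
        refine Finset.sum_congr rfl fun e he => ?_
        induction e using Sym2.ind with
        | _ u w =>
          have hadj : T.Adj u w := by
            rw [SimpleGraph.mem_edgeFinset, SimpleGraph.mem_edgeSet] at he
            exact he
          have hne : u ≠ w := hadj.ne
          have hsplit : ∀ v : V, (if v ∈ s(u, w) then (1:ℕ) else 0)
              = (if v = u then 1 else 0) + (if v = w then 1 else 0) := by
            intro v
            simp only [Sym2.mem_iff]
            by_cases hvu : v = u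
            · subst hvu
              simp [hne]
            · by_cases hvw : v = w
              · subst hvw
                simp [hvu]
              · simp [hvu, hvw]
          rw [Finset.sum_congr rfl fun v _ => hsplit v, Finset.sum_add_distrib,
            Finset.sum_ite_eq' _ u (fun _ => (1:ℕ)), Finset.sum_ite_eq' _ w (fun _ => (1:ℕ)),
            Sym2.map_pair_eq, Sym2.lift_mk]
          simp [Finset.mem_filter]

set_option maxHeartbeats 1000000 in
theorem stmt13 [Fintype V] [DecidableEq V] (T : SimpleGraph V) [DecidableRel T.Adj]
    (hT : T.IsTree) (hdeg : ∀ v : V, T.degree v ≤ 4) (n : ℕ) (hn : n = Fintype.card V)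
    (h5 : 5 ≤ n) (hmod : n % 4 = 3) :
    SO2 T ≤ (315 * (n : ℝ) - 281) / 425 ∧
      (SO2 T = (315 * (n : ℝ) - 281) / 425 ↔
        (mij T 1 4 = (n - 1) / 2 ∧ mij T 2 4 = (n - 7) / 2 ∧ mij T 1 3 = 2 ∧ mij T 3 4 = 1 ∧ mij T 1 2 = 0 ∧ mij T 2 2 = 0 ∧ mij T 2 3 = 0 ∧ mij T 3 3 = 0 ∧ mij T 4 4 = 0)) := by
  classical
  have hd1 : ∀ v : V, 1 ≤ T.degree v :=
    degree_one_le T hT.isConnected (by omega) 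
  -- membership of degree pairs
  have hmem : ∀ e ∈ T.edgeFinset, Sym2.map (fun v => T.degree v) e ∈ Kdeg := by
    intro e he
    induction e using Sym2.ind with
    | _ u w =>
      rw [Sym2.map_pair_eq]
      exact mem_Kdeg (hd1 u) (hdeg u) (hd1 w) (hdeg w)
  -- fiber cards are the mij
  have hfiber : ∀ i j : ℕ,
      (T.edgeFinset.filter (fun e => Sym2.map (fun v => T.degree v) e = s(i,j))).card
        = mij T i j := fun i j => rfl
  -- E1 : edge count
  have e1 : mij T 1 1 + mij T 1 2 + mij T 1 3 + mij T 1 4 + mij T 2 2 + mij T 2 3 + mij T 2 4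
      + mij T 3 3 + mij T 3 4 + mij T 4 4 + 1 = n := by
    have hcard := Finset.card_eq_sum_card_fiberwise hmem
    rw [Ksum (fun k => (T.edgeFinset.filter (fun e => Sym2.map (fun v => T.degree v) e = k)).card)]
      at hcard
    simp only [hfiber] at hcard
    have hedge : T.edgeFinset.card + 1 = Fintype.card V := hT.card_edgeFinset
    omega
  -- degree-incidence identities
  have hcnt : ∀ i : ℕ, i * nd T i = ∑ k ∈ Kdeg,
      (T.edgeFinset.filter (fun e => Sym2.map (fun v => T.degree v) e = k)).card •
        (Sym2.lift ⟨fun a b => (if a = i then 1 else 0) + (if b = i then 1 else 0),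
          by intro a b; dsimp only; rw [add_comm]⟩ : Sym2 ℕ → ℕ) k := by
    intro i
    rw [count_deg T i, sum_fiber_card T.edgeFinset _ Kdeg hmem]
  have e2 : 1 * nd T 1 = 2 * mij T 1 1 + mij T 1 2 + mij T 1 3 + mij T 1 4 := by
    have h := hcnt 1
    rw [Ksum] at h
    simp only [Sym2.lift_mk, hfiber, smul_eq_mul] at h
    norm_num at h
    omega
  have e3 : 2 * nd T 2 = 2 * mij T 2 2 + mij T 1 2 + mij T 2 3 + mij T 2 4 := by
    have h := hcnt 2
    rw [Ksum] at h
    simp only [Sym2.lift_mk, hfiber, smul_eq_mul] at h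
    norm_num at h
    omega
  have e4 : 3 * nd T 3 = 2 * mij T 3 3 + mij T 1 3 + mij T 2 3 + mij T 3 4 := by
    have h := hcnt 3
    rw [Ksum] at h
    simp only [Sym2.lift_mk, hfiber, smul_eq_mul] at h
    norm_num at h
    omega
  have e5 : 4 * nd T 4 = 2 * mij T 4 4 + mij T 1 4 + mij T 2 4 + mij T 3 4 := by
    have h := hcnt 4
    rw [Ksum] at h
    simp only [Sym2.lift_mk, hfiber, smul_eq_mul] at h
    norm_num at h
    omega
  -- E6 : vertex count
  have e6 : nd T 1 + nd T 2 + nd T 3 + nd T 4 = n := by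
    have hmemv : ∀ v ∈ (Finset.univ : Finset V), T.degree v ∈ ({1,2,3,4} : Finset ℕ) := by
      intro v _
      have := hd1 v; have := hdeg v
      simp only [Finset.mem_insert, Finset.mem_singleton]
      omega
    have hcard := Finset.card_eq_sum_card_fiberwise hmemv
    rw [Finset.sum_insert (by decide), Finset.sum_insert (by decide),
      Finset.sum_insert (by decide), Finset.sum_singleton] at hcard
    rw [Finset.card_univ] at hcard
    simp only [nd]
    omega
  -- SO2 value
  have hSO2 : SO2 T = ((3315 * mij T 1 2 + 4420 * mij T 1 3 + 4875 * mij T 1 4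
      + 2125 * mij T 2 3 + 3315 * mij T 2 4 + 1547 * mij T 3 4 : ℕ) : ℝ) / 5525 := by
    have hstep : SO2 T = ∑ e ∈ T.edgeFinset, phic (Sym2.map (fun v => T.degree v) e) := by
      rw [SO2]
      refine Finset.sum_congr rfl fun e _ => ?_
      induction e using Sym2.ind with
      | _ u w => rw [Sym2.map_pair_eq, phic, Sym2.lift_mk, Sym2.lift_mk]
    rw [hstep, sum_fiber_card T.edgeFinset _ Kdeg hmem, Ksum]
    simp only [hfiber, phic11, phic12, phic13, phic14, phic22, phic23, phic24, phic33,
      phic34, phic44, nsmul_eq_mul]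
    push_cast
    ring
  -- apply the arithmetic lemma
  obtain ⟨hb, hiff⟩ := so2_arith n (mij T 1 1) (mij T 1 2) (mij T 1 3) (mij T 1 4) (mij T 2 2)
    (mij T 2 3) (mij T 2 4) (mij T 3 3) (mij T 3 4) (mij T 4 4)
    (nd T 1) (nd T 2) (nd T 3) (nd T 4) e1 (by omega) e3 e4 e5 e6 h5 hmod
  have hRHS : (315 * (n : ℝ) - 281) / 425 = (4095 * (n:ℝ) - 3653) / 5525 := by ring
  set N : ℕ := 3315 * mij T 1 2 + 4420 * mij T 1 3 + 4875 * mij T 1 4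
      + 2125 * mij T 2 3 + 3315 * mij T 2 4 + 1547 * mij T 3 4 with hN
  constructor
  · rw [hSO2, hRHS, div_le_div_iff₀ (by norm_num) (by norm_num)]
    have : (N : ℝ) + 3653 ≤ 4095 * (n:ℝ) := by exact_mod_cast hb
    nlinarith
  · rw [hSO2, hRHS]
    constructor
    · intro h
      have h' : (N : ℝ) = 4095 * (n:ℝ) - 3653 := by
        field_simp at h
        linarith
      have h'' : N + 3653 = 4095 * n := by
        have : (N : ℝ) + 3653 = 4095 * (n:ℝ) := by linarith
        exact_mod_cast this
      exact hiff.mp h''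
    · intro h
      have h'' : N + 3653 = 4095 * n := hiff.mpr h
      have : (N : ℝ) + 3653 = 4095 * (n:ℝ) := by exact_mod_cast h''
      rw [show (N:ℝ) = 4095 * (n:ℝ) - 3653 by linarith]
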